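/- For a ∈ [0, 1/2] and b ∈ [1/2, 1], with F uniform on [0,1] and G uniform on [a,b], the map (a,b) ↦ (θ, I₂) has inverse given by a = (−2θ + I₂ + 1 ± √(4θ(1−θ) + I₂(I₂−2)))/2 and b = 2 − a − 2θ. -/
import Mathlib


open MeasureTheory Set

/-- The cdf of the uniform distribution on [a, b]. -/
noncomputable def unifCdf (a b x : ℝ) : ℝ :=
  if x < a then 0 else if b ≤ x then 1 else (x - a) / (b - a)

lemma unifCdf_mono {a b : ℝ} : Monotone (unifCdf a b) := by
  intro x y hxy
  unfold unifCdf
  split_ifs with h1 h2 h3 h4 h5 h6 h7 h8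
  · exact le_rfl
  · norm_num
  · push_neg at h2 h3; apply div_nonneg <;> linarith
  · exact (h1 (hxy.trans_lt h5)).elim
  · exact le_rfl
  · exact (h6 (h4.trans hxy)).elim
  · push_neg at h1 h4; linarith
  · push_neg at h1 h4; rw [div_le_one (by linarith)]; linarith
  · push_neg at h1 h4 h7 h8; gcongr <;> linarith

lemma unifCdf_int (a b p q : ℝ) : IntervalIntegrable (unifCdf a b) volume p q :=
  unifCdf_mono.intervalIntegrable

/-- integral below a is 0 -/
lemma int_lo {a b p q : ℝ} (hab : a < b) (hpq : p ≤ q) (hq : q ≤ a) :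
    ∫ x in p..q, unifCdf a b x = 0 := by
  rw [intervalIntegral.integral_congr (g := fun _ => (0:ℝ)), intervalIntegral.integral_const,
    smul_zero]
  intro x hx
  rw [uIcc_of_le hpq] at hx
  unfold unifCdf
  split_ifs with h1 h2
  · rfl
  · linarith [hx.2]
  · push_neg at h1
    have : x = a := le_antisymm (hx.2.trans hq) h1
    rw [this]; simp

/-- integral in the middle -/
lemma int_mid {a b p q : ℝ} (hab : a < b) (hp : a ≤ p) (hpq : p ≤ q) (hq : q ≤ b) :
    ∫ x in p..q, unifCdf a b x = ((q - a)^2 - (p - a)^2) / (2 * (b - a)) := by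
  have h1 : ∫ x in p..q, unifCdf a b x = ∫ x in p..q, (x - a) / (b - a) := by
    apply intervalIntegral.integral_congr
    intro x hx
    rw [uIcc_of_le hpq] at hx
    show unifCdf a b x = (x - a) / (b - a)
    unfold unifCdf
    split_ifs with h1 h2
    · linarith [hx.1]
    · have hxb : x = b := le_antisymm (hx.2.trans hq) h2
      rw [hxb, div_self (by linarith)]
    · rfl
  rw [h1, intervalIntegral.integral_div]
  have h2 : ∫ x in p..q, (x - a) = ((q - a)^2 - (p - a)^2) / 2 := by
    rw [intervalIntegral.integral_comp_sub_right (fun x => x) a, integral_id]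
  rw [h2, div_div]

/-- integral above b is 1 -/
lemma int_hi {a b p q : ℝ} (hab : a < b) (hp : b ≤ p) (hpq : p ≤ q) :
    ∫ x in p..q, unifCdf a b x = q - p := by
  rw [intervalIntegral.integral_congr (g := fun _ => (1:ℝ)), intervalIntegral.integral_const,
    smul_eq_mul, mul_one]
  intro x hx
  rw [uIcc_of_le hpq] at hx
  unfold unifCdf
  split_ifs with h1 h2
  · linarith [hx.1]
  · rfl
  · push_neg at h2; linarith [hx.1]

/-- For a ∈ [0, 1/2] and b ∈ [1/2, 1], with F uniform on [0,1] and G uniform on [a,b], the map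
(a,b) ↦ (θ, I₂) is inverted by a = (−2θ + I₂ + 1 ± √(4θ(1−θ) + I₂(I₂−2)))/2 and
b = 2 − a − 2θ. -/
theorem uniform_parameters_from_theta_I2
    (a b : ℝ) (ha0 : 0 ≤ a) (ha : a ≤ 1/2) (hb : 1/2 ≤ b) (hb1 : b ≤ 1)
    (θ I2 : ℝ)
    (hθ : θ = ∫ x in (0:ℝ)..1, unifCdf a b x)
    (hI2 : I2 = 2 * ((∫ x in (1/2:ℝ)..1, unifCdf a b x) - ∫ x in (0:ℝ)..(1/2), unifCdf a b x)) :
    (a = (-2*θ + I2 + 1 + Real.sqrt (4*θ*(1 - θ) + I2*(I2 - 2)))/2 ∨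
     a = (-2*θ + I2 + 1 - Real.sqrt (4*θ*(1 - θ) + I2*(I2 - 2)))/2) ∧
    b = 2 - a - 2*θ := by
  by_cases hab : a < b
  · -- split integrals
    have hs : (0:ℝ) < b - a := by linarith
    have h01 : (∫ x in (0:ℝ)..1, unifCdf a b x)
        = (∫ x in (0:ℝ)..(1/2), unifCdf a b x) + ∫ x in (1/2:ℝ)..1, unifCdf a b x :=
      (intervalIntegral.integral_add_adjacent_intervals (unifCdf_int a b 0 (1/2))
        (unifCdf_int a b (1/2) 1)).symm
    have hJ1 : (∫ x in (0:ℝ)..(1/2), unifCdf a b x) = (1/2 - a)^2 / (2 * (b - a)) := by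
      rw [← intervalIntegral.integral_add_adjacent_intervals (unifCdf_int a b 0 a)
        (unifCdf_int a b a (1/2)), int_lo hab ha0 le_rfl, int_mid hab le_rfl ha hb]
      try ring
    have hJ2 : (∫ x in (1/2:ℝ)..1, unifCdf a b x)
        = ((b - a)^2 - (1/2 - a)^2) / (2 * (b - a)) + (1 - b) := by
      rw [← intervalIntegral.integral_add_adjacent_intervals (unifCdf_int a b (1/2) b)
        (unifCdf_int a b b 1), int_mid hab ha hb le_rfl, int_hi hab le_rfl hb1]
      try ring
    have hθv : θ = 1 - (a + b) / 2 := by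
      rw [hθ, h01, hJ1, hJ2]
      field_simp
      ring
    have hI2v : I2 = ((b - a)^2 - 2 * (1/2 - a)^2) / (b - a) + 2 - 2*b := by
      rw [hI2, hJ1, hJ2]
      field_simp
      ring
    have hE : 1 - b + a - I2 = (1 - 2*a) * (1/2 - b) / (b - a) := by
      rw [hI2v]; field_simp; ring
    have hEle : 1 - b + a - I2 ≤ 0 := by
      rw [hE]
      apply div_nonpos_of_nonpos_of_nonneg _ hs.le
      apply mul_nonpos_of_nonneg_of_nonpos <;> linarith
    have hD : 4*θ*(1 - θ) + I2*(I2 - 2) = (1 - b + a - I2)^2 := by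
      rw [hθv, hI2v]
      field_simp
      ring
    have hsqrt : Real.sqrt (4*θ*(1 - θ) + I2*(I2 - 2)) = -(1 - b + a - I2) := by
      rw [hD, Real.sqrt_sq_eq_abs, abs_of_nonpos hEle]
    constructor
    · right
      rw [hsqrt, hθv]
      ring
    · rw [hθv]; ring
  · -- a = b = 1/2
    have ha' : a = 1/2 := le_antisymm ha (by push_neg at hab; linarith)
    have hb' : b = 1/2 := by push_neg at hab; linarith
    subst ha' hb'
    have hup : ∀ x : ℝ, unifCdf (1/2) (1/2) x = if x < 1/2 then 0 else 1 := by
      intro x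
      unfold unifCdf
      split_ifs with h1 h2 <;> first | rfl | (push_neg at *; linarith)
    have hhi : (∫ x in (1/2:ℝ)..1, unifCdf (1/2) (1/2) x) = 1/2 := by
      rw [intervalIntegral.integral_congr (g := fun _ => (1:ℝ))]
      · norm_num
      · intro x hx
        rw [uIcc_of_le (by norm_num)] at hx
        rw [hup x, if_neg (not_lt.mpr hx.1)]
    have hlo : (∫ x in (0:ℝ)..(1/2), unifCdf (1/2) (1/2) x) = 0 := by
      rw [intervalIntegral.integral_congr_ae (g := fun _ => (0:ℝ)),
        intervalIntegral.integral_const, smul_zero]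
      filter_upwards [compl_mem_ae_iff.mpr (measure_singleton (1/2:ℝ))] with x hx hx'
      rw [uIoc_of_le (by norm_num)] at hx'
      rw [hup x, if_pos]
      exact lt_of_le_of_ne hx'.2 hx
    have h01 : (∫ x in (0:ℝ)..1, unifCdf (1/2) (1/2) x) = 1/2 := by
      rw [← intervalIntegral.integral_add_adjacent_intervals (unifCdf_int _ _ 0 (1/2))
        (unifCdf_int _ _ (1/2) 1), hlo, hhi]
      norm_num
    rw [h01] at hθ
    rw [hhi, hlo] at hI2
    subst hθ hI2
    norm_num
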